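/- arXiv:2103.10129 — 2 statements merged into one kernel-verified Lean document; each statement's English description precedes it below -/
import Mathlib

section
/- Let A = M − N be a splitting of A ∈ ℝ^{n×n}, let B ∈ ℝ^{n×n}, b ∈ ℝⁿ, and let Ω ∈ ℝ^{n×n} be such that Ω + M is invertible. Assume x* ∈ ℝⁿ satisfies F(x*) = 0 and that ‖(Ω+M)^{-1}‖·(‖Ω+N‖ + ‖B‖) < 1. Then the exact Newton-based matrix splitting iteration x^{k+1} = (Ω+M)^{-1}[(Ω+N)x^k + B|x^k| + b], started from any x^0 ∈ ℝⁿ, satisfies ‖x^{k+1} − x*‖ ≤ ‖(Ω+M)^{-1}‖·(‖Ω+N‖ + ‖B‖)·‖x^k − x*‖ for all k ≥ 0; in particular the sequence {x^k} converges linearly to x*. -/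
open Matrix Filter

/-- Componentwise absolute value of a vector in Euclidean space. -/
noncomputable def vabs {n : ℕ} (x : EuclideanSpace ℝ (Fin n)) : EuclideanSpace ℝ (Fin n) :=
  WithLp.toLp 2 (fun i => |x i|)

/-- A matrix acting on Euclidean space (so that vector norms are the Euclidean 2-norm). -/
noncomputable def mulV {n : ℕ} (M : Matrix (Fin n) (Fin n) ℝ) (x : EuclideanSpace ℝ (Fin n)) :
    EuclideanSpace ℝ (Fin n) :=
  Matrix.toEuclideanCLM (𝕜 := ℝ) M x

/-- Spectral norm of a real matrix: the operator norm induced by the Euclidean vector norm. -/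
noncomputable def spec {n : ℕ} (M : Matrix (Fin n) (Fin n) ℝ) : ℝ :=
  ‖Matrix.toEuclideanCLM (𝕜 := ℝ) M‖

/-- The GAVE residual function `F(x) = A x − B |x| − b`. -/
noncomputable def gaveF {n : ℕ} (A B : Matrix (Fin n) (Fin n) ℝ)
    (b : EuclideanSpace ℝ (Fin n)) (x : EuclideanSpace ℝ (Fin n)) : EuclideanSpace ℝ (Fin n) :=
  mulV A x - mulV B (vabs x) - b

/-- The AVE residual function `A x − |x| − b` (the GAVE with `B = I`). -/
noncomputable def aveF {n : ℕ} (A : Matrix (Fin n) (Fin n) ℝ)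
    (b : EuclideanSpace ℝ (Fin n)) (x : EuclideanSpace ℝ (Fin n)) : EuclideanSpace ℝ (Fin n) :=
  mulV A x - vabs x - b

/-- A sequence converges linearly to `xs`: the distances to `xs` contract by a fixed
factor `c < 1` at every step, and the sequence tends to `xs`. -/
def ConvergesLinearlyTo {n : ℕ} (x : ℕ → EuclideanSpace ℝ (Fin n))
    (xs : EuclideanSpace ℝ (Fin n)) : Prop :=
  (∃ c : ℝ, 0 ≤ c ∧ c < 1 ∧ ∀ k : ℕ, ‖x (k + 1) - xs‖ ≤ c * ‖x k - xs‖) ∧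
    Tendsto x atTop (nhds xs)

lemma mulV_sub' {n : ℕ} (M : Matrix (Fin n) (Fin n) ℝ) (u v : EuclideanSpace ℝ (Fin n)) :
    mulV M (u - v) = mulV M u - mulV M v := by simp [mulV]

lemma mulV_mul' {n : ℕ} (M P : Matrix (Fin n) (Fin n) ℝ) (u : EuclideanSpace ℝ (Fin n)) :
    mulV (M * P) u = mulV M (mulV P u) := by simp [mulV]

lemma mulV_one' {n : ℕ} (u : EuclideanSpace ℝ (Fin n)) : mulV 1 u = u := by simp [mulV]

lemma mulV_addM {n : ℕ} (M P : Matrix (Fin n) (Fin n) ℝ) (u : EuclideanSpace ℝ (Fin n)) :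
    mulV (M + P) u = mulV M u + mulV P u := by simp [mulV]

lemma norm_mulV_le {n : ℕ} (M : Matrix (Fin n) (Fin n) ℝ) (u : EuclideanSpace ℝ (Fin n)) :
    ‖mulV M u‖ ≤ spec M * ‖u‖ := (Matrix.toEuclideanCLM (𝕜 := ℝ) M).le_opNorm u

lemma norm_vabs_sub {n : ℕ} (u v : EuclideanSpace ℝ (Fin n)) :
    ‖vabs u - vabs v‖ ≤ ‖u - v‖ := by
  rw [EuclideanSpace.norm_eq, EuclideanSpace.norm_eq]
  apply Real.sqrt_le_sqrt
  apply Finset.sum_le_sum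
  intro i _
  have : |(vabs u - vabs v) i| ≤ |(u - v) i| := by
    simpa [vabs] using abs_abs_sub_abs_le_abs_sub (u i) (v i)
  exact pow_le_pow_left₀ (abs_nonneg _) this 2

theorem stmt0 {n : ℕ} (A M N B Ω : Matrix (Fin n) (Fin n) ℝ)
    (b : EuclideanSpace ℝ (Fin n)) (hA : A = M - N) (hinv : IsUnit (Ω + M))
    (xs : EuclideanSpace ℝ (Fin n)) (hxs : gaveF A B b xs = 0)
    (hcond : spec (Ω + M)⁻¹ * (spec (Ω + N) + spec B) < 1)
    (x : ℕ → EuclideanSpace ℝ (Fin n))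
    (hx : ∀ k : ℕ, x (k + 1) = mulV (Ω + M)⁻¹ (mulV (Ω + N) (x k) + mulV B (vabs (x k)) + b)) :
    (∀ k : ℕ, ‖x (k + 1) - xs‖ ≤ spec (Ω + M)⁻¹ * (spec (Ω + N) + spec B) * ‖x k - xs‖) ∧
      ConvergesLinearlyTo x xs := by
  set c : ℝ := spec (Ω + M)⁻¹ * (spec (Ω + N) + spec B) with hc
  have hc0 : 0 ≤ c :=
    mul_nonneg (norm_nonneg _) (add_nonneg (norm_nonneg _) (norm_nonneg _))
  -- fixed point equation
  have hAxs : mulV A xs = mulV B (vabs xs) + b := by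
    have h := hxs
    unfold gaveF at h
    rw [sub_sub] at h
    exact sub_eq_zero.mp h
  have hdet : IsUnit (Ω + M).det := (Matrix.isUnit_iff_isUnit_det _).mp hinv
  have hfix : xs = mulV (Ω + M)⁻¹ (mulV (Ω + N) xs + mulV B (vabs xs) + b) := by
    have h1 : mulV (Ω + M) xs = mulV (Ω + N) xs + mulV B (vabs xs) + b := by
      have hsplit : (Ω + M) = (Ω + N) + A := by rw [hA]; abel
      rw [hsplit, mulV_addM, hAxs, add_assoc]
    calc xs = mulV 1 xs := (mulV_one' xs).symm
      _ = mulV ((Ω + M)⁻¹ * (Ω + M)) xs := by rw [Matrix.nonsing_inv_mul _ hdet]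
      _ = mulV (Ω + M)⁻¹ (mulV (Ω + M) xs) := mulV_mul' _ _ _
      _ = _ := by rw [h1]
  -- contraction estimate
  have hkey : ∀ k : ℕ, ‖x (k + 1) - xs‖ ≤ c * ‖x k - xs‖ := by
    intro k
    have hdiff : x (k + 1) - xs
        = mulV (Ω + M)⁻¹ (mulV (Ω + N) (x k - xs) + mulV B (vabs (x k) - vabs xs)) := by
      have hv : (mulV (Ω + N) (x k) + mulV B (vabs (x k)) + b)
          - (mulV (Ω + N) xs + mulV B (vabs xs) + b)
          = mulV (Ω + N) (x k - xs) + mulV B (vabs (x k) - vabs xs) := by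
        rw [mulV_sub', mulV_sub']; abel
      rw [hx k]
      nth_rewrite 1 [hfix]
      rw [← mulV_sub', hv]
    rw [hdiff]
    calc ‖mulV (Ω + M)⁻¹ (mulV (Ω + N) (x k - xs) + mulV B (vabs (x k) - vabs xs))‖
        ≤ spec (Ω + M)⁻¹ * ‖mulV (Ω + N) (x k - xs) + mulV B (vabs (x k) - vabs xs)‖ :=
          norm_mulV_le _ _
      _ ≤ spec (Ω + M)⁻¹ * ((spec (Ω + N) + spec B) * ‖x k - xs‖) := by
          apply mul_le_mul_of_nonneg_left _ (norm_nonneg _)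
          calc ‖mulV (Ω + N) (x k - xs) + mulV B (vabs (x k) - vabs xs)‖
              ≤ ‖mulV (Ω + N) (x k - xs)‖ + ‖mulV B (vabs (x k) - vabs xs)‖ := norm_add_le _ _
            _ ≤ spec (Ω + N) * ‖x k - xs‖ + spec B * ‖vabs (x k) - vabs xs‖ :=
                add_le_add (norm_mulV_le _ _) (norm_mulV_le _ _)
            _ ≤ spec (Ω + N) * ‖x k - xs‖ + spec B * ‖x k - xs‖ :=
                add_le_add le_rfl
                  (mul_le_mul_of_nonneg_left (norm_vabs_sub _ _) (norm_nonneg _))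
            _ = (spec (Ω + N) + spec B) * ‖x k - xs‖ := by ring
      _ = c * ‖x k - xs‖ := by rw [hc]; ring
  refine ⟨hkey, ⟨c, hc0, hcond, hkey⟩, ?_⟩
  -- convergence
  have hgeo : ∀ k : ℕ, ‖x k - xs‖ ≤ c ^ k * ‖x 0 - xs‖ := by
    intro k
    induction k with
    | zero => simp
    | succ k ih =>
      calc ‖x (k + 1) - xs‖ ≤ c * ‖x k - xs‖ := hkey k
        _ ≤ c * (c ^ k * ‖x 0 - xs‖) := mul_le_mul_of_nonneg_left ih hc0
        _ = c ^ (k + 1) * ‖x 0 - xs‖ := by ring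
  have hlim : Tendsto (fun k => ‖x k - xs‖) atTop (nhds 0) := by
    have h0 : Tendsto (fun k : ℕ => c ^ k * ‖x 0 - xs‖) atTop (nhds 0) := by
      have := (tendsto_pow_atTop_nhds_zero_of_lt_one hc0 hcond).mul_const ‖x 0 - xs‖
      simpa using this
    exact squeeze_zero (fun k => norm_nonneg _) hgeo h0
  have : Tendsto (fun k => x k - xs) atTop (nhds 0) := tendsto_zero_iff_norm_tendsto_zero.mpr hlim
  have := this.add_const xs
  simpa using this
end

section
/- Let A = M − N be a splitting of A ∈ ℝ^{n×n}, let B ∈ ℝ^{n×n}, b ∈ ℝⁿ, θ ∈ [0,1), and let Ω ∈ ℝ^{n×n} be such that Ω + M is invertible. Suppose F(x*) = 0. Then for every x, y ∈ ℝⁿ with ‖(Ω+M)y − [(Ω+N)x + B|x| + b]‖ ≤ θ‖F(x)‖, one has ‖y − x*‖ ≤ ‖(Ω+M)^{-1}‖·[θ(‖Ω+M‖ + ‖Ω+N‖ + ‖B‖) + ‖Ω+N‖ + ‖B‖]·‖x − x*‖. -/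
open Matrix Filter

lemma mulV_sub_vec {n : ℕ} (M : Matrix (Fin n) (Fin n) ℝ) (x y : EuclideanSpace ℝ (Fin n)) :
    mulV M (x - y) = mulV M x - mulV M y := map_sub _ x y

lemma mulV_matsub {n : ℕ} (M N : Matrix (Fin n) (Fin n) ℝ) (x : EuclideanSpace ℝ (Fin n)) :
    mulV (M - N) x = mulV M x - mulV N x := by
  simp [mulV, map_sub]

lemma mulV_norm_le {n : ℕ} (M : Matrix (Fin n) (Fin n) ℝ) (x : EuclideanSpace ℝ (Fin n)) :
    ‖mulV M x‖ ≤ spec M * ‖x‖ :=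
  ContinuousLinearMap.le_opNorm _ _

lemma vabs_lip {n : ℕ} (x y : EuclideanSpace ℝ (Fin n)) :
    ‖vabs x - vabs y‖ ≤ ‖x - y‖ := by
  rw [EuclideanSpace.norm_eq, EuclideanSpace.norm_eq]
  apply Real.sqrt_le_sqrt
  apply Finset.sum_le_sum
  intro i _
  have h1 : (vabs x - vabs y) i = |x i| - |y i| := rfl
  have h2 : (x - y) i = x i - y i := rfl
  rw [h1, h2]
  simp only [Real.norm_eq_abs]
  exact pow_le_pow_left₀ (abs_nonneg _) (abs_abs_sub_abs_le_abs_sub (x i) (y i)) 2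

theorem stmt1 {n : ℕ} (A M N B Ω : Matrix (Fin n) (Fin n) ℝ)
    (b : EuclideanSpace ℝ (Fin n)) (hA : A = M - N) (θ : ℝ) (hθ0 : 0 ≤ θ) (hθ1 : θ < 1)
    (hinv : IsUnit (Ω + M))
    (xs : EuclideanSpace ℝ (Fin n)) (hxs : gaveF A B b xs = 0) :
    ∀ x y : EuclideanSpace ℝ (Fin n),
      ‖mulV (Ω + M) y - (mulV (Ω + N) x + mulV B (vabs x) + b)‖ ≤ θ * ‖gaveF A B b x‖ →
      ‖y - xs‖ ≤ spec (Ω + M)⁻¹ *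
        (θ * (spec (Ω + M) + spec (Ω + N) + spec B) + spec (Ω + N) + spec B) * ‖x - xs‖ := by
  intro x y hxy
  set P := Ω + M with hP
  set Q := Ω + N with hQ
  have hPQ : P - Q = A := by rw [hA, hP, hQ]; abel
  -- F(xs) = 0 rewritten
  have hxs' : mulV A xs = mulV B (vabs xs) + b := by
    have h := hxs
    unfold gaveF at h
    have := sub_eq_zero.mp (by rw [sub_sub] at h; exact h)
    exact this
  -- key identity
  have hid : mulV P (y - xs) =
      (mulV P y - (mulV Q x + mulV B (vabs x) + b))
        + mulV Q (x - xs) + mulV B (vabs x - vabs xs) := by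
    have h1 : mulV P xs - mulV Q xs = mulV A xs := by
      rw [← hPQ, mulV_matsub]
    rw [mulV_sub_vec, mulV_sub_vec, mulV_sub_vec]
    have h4 : mulV P xs = mulV Q xs + mulV B (vabs xs) + b := by
      have := h1
      rw [hxs'] at this
      linear_combination (norm := abel) this
    rw [h4]
    abel
  -- bound on F(x)
  have hF : ‖gaveF A B b x‖ ≤ (spec P + spec Q + spec B) * ‖x - xs‖ := by
    have hFx : gaveF A B b x = mulV P (x - xs) - mulV Q (x - xs) - mulV B (vabs x - vabs xs) := by
      unfold gaveF
      rw [mulV_sub_vec, mulV_sub_vec, mulV_sub_vec]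
      have h1 : mulV P x - mulV Q x = mulV A x := by rw [← hPQ, mulV_matsub]
      have h2 : mulV P xs - mulV Q xs = mulV A xs := by rw [← hPQ, mulV_matsub]
      rw [hxs'] at h2
      linear_combination (norm := abel) h2 - h1
    rw [hFx]
    have t1 := mulV_norm_le P (x - xs)
    have t2 := mulV_norm_le Q (x - xs)
    have t3 := mulV_norm_le B (vabs x - vabs xs)
    have t4 := vabs_lip x xs
    have t5 : spec B * ‖vabs x - vabs xs‖ ≤ spec B * ‖x - xs‖ :=
      mul_le_mul_of_nonneg_left t4 (norm_nonneg _)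
    calc ‖mulV P (x - xs) - mulV Q (x - xs) - mulV B (vabs x - vabs xs)‖
        ≤ ‖mulV P (x - xs) - mulV Q (x - xs)‖ + ‖mulV B (vabs x - vabs xs)‖ :=
          norm_sub_le _ _
      _ ≤ ‖mulV P (x - xs)‖ + ‖mulV Q (x - xs)‖ + ‖mulV B (vabs x - vabs xs)‖ := by
          have := norm_sub_le (mulV P (x - xs)) (mulV Q (x - xs))
          linarith
      _ ≤ (spec P + spec Q + spec B) * ‖x - xs‖ := by nlinarith
  -- bound on mulV P (y - xs)
  have hPy : ‖mulV P (y - xs)‖ ≤ θ * ‖gaveF A B b x‖ + (spec Q + spec B) * ‖x - xs‖ := by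
    rw [hid]
    have t2 := mulV_norm_le Q (x - xs)
    have t3 := mulV_norm_le B (vabs x - vabs xs)
    have t4 := vabs_lip x xs
    have t5 : spec B * ‖vabs x - vabs xs‖ ≤ spec B * ‖x - xs‖ :=
      mul_le_mul_of_nonneg_left t4 (norm_nonneg _)
    calc ‖(mulV P y - (mulV Q x + mulV B (vabs x) + b)) + mulV Q (x - xs)
          + mulV B (vabs x - vabs xs)‖
        ≤ ‖(mulV P y - (mulV Q x + mulV B (vabs x) + b)) + mulV Q (x - xs)‖
            + ‖mulV B (vabs x - vabs xs)‖ := norm_add_le _ _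
      _ ≤ ‖mulV P y - (mulV Q x + mulV B (vabs x) + b)‖ + ‖mulV Q (x - xs)‖
            + ‖mulV B (vabs x - vabs xs)‖ := by
          have := norm_add_le (mulV P y - (mulV Q x + mulV B (vabs x) + b)) (mulV Q (x - xs))
          linarith
      _ ≤ θ * ‖gaveF A B b x‖ + (spec Q + spec B) * ‖x - xs‖ := by nlinarith
  -- invert P
  have hdet : IsUnit P.det := (Matrix.isUnit_iff_isUnit_det P).mp hinv
  have hPinv : mulV P⁻¹ (mulV P (y - xs)) = y - xs := by
    simp only [mulV, ← ContinuousLinearMap.comp_apply, ← ContinuousLinearMap.mul_def]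
    rw [← _root_.map_mul, Matrix.nonsing_inv_mul P hdet, _root_.map_one, ContinuousLinearMap.one_apply]
  have hy : ‖y - xs‖ ≤ spec P⁻¹ * ‖mulV P (y - xs)‖ := by
    calc ‖y - xs‖ = ‖mulV P⁻¹ (mulV P (y - xs))‖ := by rw [hPinv]
      _ ≤ spec P⁻¹ * ‖mulV P (y - xs)‖ := mulV_norm_le _ _
  have hs : 0 ≤ spec P⁻¹ := norm_nonneg _
  have hmono : spec P⁻¹ * ‖mulV P (y - xs)‖ ≤
      spec P⁻¹ * (θ * ‖gaveF A B b x‖ + (spec Q + spec B) * ‖x - xs‖) :=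
    mul_le_mul_of_nonneg_left hPy hs
  have hfin : θ * ‖gaveF A B b x‖ ≤ θ * ((spec P + spec Q + spec B) * ‖x - xs‖) :=
    mul_le_mul_of_nonneg_left hF hθ0
  nlinarith [mul_le_mul_of_nonneg_left hfin hs]
end
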